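/- Let s > s̃ > 0, let ψ and ψ̃ be inner functions, and define u(z) = (s² - s̃²)ψ(z)/(s - s̃ z ψ(z) ψ̃(z)) for z in the unit disk, and h(z) = 1/(s - s̃ z ψ(z) ψ̃(z)). Then H_u h = sψh, H_u² h = s² h, and K_u u = s̃ ψ̃ u, K_u² u = s̃² u, where H_u is the anti-linear Hankel operator with symbol u and K_u = S*H_u. -/

import Mathlib

open MeasureTheory Complex Real ComplexConjugate AddCircle

noncomputable section

instance fact2pi : Fact (0 < 2 * π) := ⟨by positivity⟩

abbrev Tc : Type := AddCircle (2 * π)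

abbrev haarT : Measure Tc := haarAddCircle

abbrev HL2 : Type := Lp ℂ 2 haarT

def IsHardy (f : HL2) : Prop := ∀ n : ℤ, n < 0 → fourierCoeff (⇑f) n = 0

def IsHardyFun (u : Tc → ℂ) : Prop := ∀ n : ℤ, n < 0 → fourierCoeff u n = 0

def IsInnerF (θ : Tc → ℂ) : Prop :=
  AEStronglyMeasurable θ haarT ∧ (∀ᵐ x ∂haarT, ‖θ x‖ = 1) ∧ IsHardyFun θ

def IsHankelOp (u : Tc → ℂ) (H : HL2 → HL2) : Prop :=
  MemLp u 2 haarT ∧ IsHardyFun u ∧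
  (∃ C : ℝ, ∀ f, ‖H f‖ ≤ C * ‖f‖) ∧
  (∀ f g, H (f + g) = H f + H g) ∧
  (∀ (c : ℂ) (f : HL2), H (c • f) = conj c • H f) ∧
  (∀ f, IsHardy (H f)) ∧
  (∀ f g : HL2, IsHardy g →
    Integrable (fun x => u x * conj (f x) * conj (g x)) haarT →
    (inner ℂ g (H f) : ℂ) = ∫ x, u x * conj (f x) * conj (g x) ∂haarT)

def IsShiftAdjOf (H K : HL2 → HL2) : Prop :=
  ∀ f, IsHardy (K f) ∧
    ∀ n : ℤ, 0 ≤ n → fourierCoeff (⇑(K f)) n = fourierCoeff (⇑(H f)) (n + 1)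

def IsSzego (P : HL2 →L[ℂ] HL2) : Prop :=
  (∀ f, IsHardy (P f)) ∧ ∀ f g : HL2, IsHardy g → (inner ℂ g (f - P f) : ℂ) = 0

def MemKz (θ : Tc → ℂ) (f : HL2) : Prop :=
  IsHardy f ∧ ∀ h w : HL2, IsHardy h →
    (⇑w =ᵐ[haarT] fun x => fourier 1 x * θ x * h x) → (inner ℂ w f : ℂ) = 0

def MemK (θ : Tc → ℂ) (f : HL2) : Prop :=
  IsHardy f ∧ ∀ h w : HL2, IsHardy h →
    (⇑w =ᵐ[haarT] fun x => θ x * h x) → (inner ℂ w f : ℂ) = 0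



/- ### helper lemmas -/


lemma norm_fourier1 (n : ℤ) (x : Tc) : ‖fourier n x‖ = 1 := Circle.norm_coe _

lemma fc_congr {f g : Tc → ℂ} (h : f =ᵐ[haarT] g) (n : ℤ) :
    fourierCoeff f n = fourierCoeff g n := by
  unfold fourierCoeff
  exact integral_congr_ae (h.mono fun x hx => by simp only [hx])

lemma fc_mul' (f : Tc → ℂ) (n : ℤ) :
    fourierCoeff f n = ∫ x, fourier (-n) x * f x ∂haarT := by
  unfold fourierCoeff; simp [smul_eq_mul]

lemma fc_conj' (F : Tc → ℂ) (n : ℤ) :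
    fourierCoeff (fun x => conj (F x)) n = conj (fourierCoeff F (-n)) := by
  rw [fc_mul', fc_mul', ← integral_conj]
  congr 1; ext x
  rw [map_mul, neg_neg, ← fourier_neg]

lemma fc_shiftk (k : ℤ) (F : Tc → ℂ) (n : ℤ) :
    fourierCoeff (fun x => fourier k x * F x) n = fourierCoeff F (n - k) := by
  rw [fc_mul', fc_mul']
  congr 1; ext x
  have : (-(n - k) : ℤ) = -n + k := by ring
  rw [this, fourier_add]; ring

lemma fc_const_mul (c : ℂ) (F : Tc → ℂ) (n : ℤ) :
    fourierCoeff (fun x => c * F x) n = c * fourierCoeff F n := by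
  rw [fc_mul', fc_mul', ← integral_const_mul]
  congr 1; ext x; ring

lemma fc_add {F G : Tc → ℂ} (hF : Integrable F haarT) (hG : Integrable G haarT) (n : ℤ) :
    fourierCoeff (fun x => F x + G x) n = fourierCoeff F n + fourierCoeff G n := by
  rw [fc_mul', fc_mul', fc_mul', ← integral_add]
  · congr 1; ext x; ring
  · exact hF.bdd_mul (map_continuous (fourier (-n))).aestronglyMeasurable
      (Filter.Eventually.of_forall fun x => (norm_fourier1 _ _).le)
  · exact hG.bdd_mul (map_continuous (fourier (-n))).aestronglyMeasurable
      (Filter.Eventually.of_forall fun x => (norm_fourier1 _ _).le)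

lemma norm_fc_le (F : Tc → ℂ) (n : ℤ) :
    ‖fourierCoeff F n‖ ≤ ∫ x, ‖F x‖ ∂haarT := by
  rw [fc_mul']
  refine (norm_integral_le_integral_norm _).trans_eq ?_
  congr 1; ext x; rw [norm_mul, norm_fourier1, one_mul]

lemma aesm_conj {F : Tc → ℂ} (hF : AEStronglyMeasurable F haarT) :
    AEStronglyMeasurable (fun x => conj (F x)) haarT :=
  RCLike.continuous_conj.comp_aestronglyMeasurable hF

lemma memLp_conj {F : Tc → ℂ} (hF : MemLp F 2 haarT) :
    MemLp (fun x => conj (F x)) 2 haarT :=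
  hF.of_le (aesm_conj hF.1) (Filter.Eventually.of_forall fun x => by
    rw [RCLike.norm_conj])

lemma integral_mul_eq_tsum {F G : Tc → ℂ} (hF : MemLp F 2 haarT) (hG : MemLp G 2 haarT) :
    ∫ x, F x * G x ∂haarT = ∑' m : ℤ, fourierCoeff F (-m) * fourierCoeff G m := by
  have hFc : MemLp (fun x => conj (F x)) 2 haarT := memLp_conj hF
  have key : (∫ x, F x * G x ∂haarT) = @inner ℂ _ _ (hFc.toLp _) (hG.toLp _) := by
    rw [MeasureTheory.L2.inner_def]
    refine (integral_congr_ae ?_).symm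
    filter_upwards [hFc.coeFn_toLp, hG.coeFn_toLp] with x h1 h2
    rw [h1, h2, RCLike.inner_apply]
    simp
    ring
  rw [key, ← (fourierBasis (T := 2*π)).repr.inner_map_map, lp.inner_eq_tsum]
  congr 1; ext m
  rw [RCLike.inner_apply, fourierBasis_repr, fourierBasis_repr,
    fc_congr hFc.coeFn_toLp, fc_congr hG.coeFn_toLp, fc_conj']
  simp
  ring

lemma HL2_ext {f g : HL2} (h : ∀ n, fourierCoeff ⇑f n = fourierCoeff ⇑g n) : f = g := by
  apply fourierBasis.repr.injective
  apply lp.ext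
  funext n
  rw [fourierBasis_repr, fourierBasis_repr]
  exact h n

lemma fc_fourierLp (m n : ℤ) :
    fourierCoeff ⇑(fourierLp (T := 2*π) 2 m) n = if n = m then 1 else 0 := by
  rw [← fourierBasis_repr, ← coe_fourierBasis, fourierBasis.repr_self, lp.single_apply]
  split_ifs <;> simp_all

lemma fcL_smul (c : ℂ) (f : HL2) (n : ℤ) :
    fourierCoeff ⇑(c • f) n = c * fourierCoeff ⇑f n := by
  rw [← fourierBasis_repr, ← fourierBasis_repr, LinearIsometryEquiv.map_smul]
  rfl

lemma fc_fourier (m n : ℤ) :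
    fourierCoeff (⇑(fourier m) : Tc → ℂ) n = if n = m then 1 else 0 := by
  rw [← fc_congr (coeFn_fourierLp 2 m) n, fc_fourierLp]

lemma fc_one (n : ℤ) :
    fourierCoeff (fun _ : Tc => (1 : ℂ)) n = if n = 0 then 1 else 0 := by
  have : (fun _ : Tc => (1:ℂ)) = (⇑(fourier (T := 2*π) 0) : Tc → ℂ) := by
    funext x; exact fourier_zero.symm
  rw [this, fc_fourier]

lemma fc_mul_hardy {F G : Tc → ℂ} (hF : MemLp F 2 haarT) (hG : MemLp G 2 haarT)
    (hFH : IsHardyFun F) (hGH : IsHardyFun G) : IsHardyFun (fun x => F x * G x) := by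
  intro n hn
  have h1 : fourierCoeff (fun x => F x * G x) n
      = ∫ x, (fun y => fourier (-n) y * F y) x * G x ∂haarT := by
    rw [fc_mul']; congr 1; ext x; ring
  have hF' : MemLp (fun y => fourier (-n) y * F y) 2 haarT :=
    hF.of_le ((map_continuous (fourier (-n))).aestronglyMeasurable.mul hF.1)
      (Filter.Eventually.of_forall fun x => by rw [norm_mul, norm_fourier1, one_mul])
  rw [h1, integral_mul_eq_tsum hF' hG]
  have : ∀ m : ℤ, fourierCoeff (fun y => fourier (-n) y * F y) (-m) * fourierCoeff G m = 0 := by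
    intro m
    rcases le_or_gt 0 m with hm | hm
    · rw [fc_shiftk, hFH (-m - -n) (by omega), zero_mul]
    · rw [hGH m hm, mul_zero]
  simp only [this, tsum_zero]

lemma innerF_memLp {θ : Tc → ℂ} (h1 : IsInnerF θ) : MemLp θ 2 haarT :=
  MemLp.of_bound h1.1 1 (h1.2.1.mono fun _ hx => hx.le)

lemma innerF_mul_memLp {θ F : Tc → ℂ} (hθ : IsInnerF θ) (hF : MemLp F 2 haarT) :
    MemLp (fun x => θ x * F x) 2 haarT :=
  hF.of_le (hθ.1.mul hF.1) (hθ.2.1.mono fun x hx => by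
    rw [norm_mul, hx, one_mul])

lemma innerF_mul_hardy {θ F : Tc → ℂ} (hθ : IsInnerF θ) (hF : MemLp F 2 haarT)
    (hFH : IsHardyFun F) : IsHardyFun (fun x => θ x * F x) :=
  fc_mul_hardy (innerF_memLp hθ) hF hθ.2.2 hFH

lemma integrable_bdd_mul {F G : Tc → ℂ} (hF : AEStronglyMeasurable F haarT) {C : ℝ}
    (hbd : ∀ᵐ x ∂haarT, ‖F x‖ ≤ C) (hG : Integrable G haarT) :
    Integrable (fun x => F x * G x) haarT := by
  refine Integrable.mono' (hG.norm.const_mul C) (hF.mul hG.aestronglyMeasurable) ?_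
  filter_upwards [hbd] with x hx
  rw [norm_mul]
  exact mul_le_mul_of_nonneg_right hx (norm_nonneg _)

lemma ne_zero_of_norm_one {w : ℂ} (hw : ‖w‖ = 1) : w ≠ 0 := by
  intro e; rw [e, norm_zero] at hw; norm_num at hw

lemma conj_of_norm_one {w : ℂ} (hw : ‖w‖ = 1) : conj w = w⁻¹ := by
  refine eq_inv_of_mul_eq_one_right ?_
  rw [mul_comm, Complex.conj_mul']
  norm_cast
  rw [hw]; norm_num

lemma denom_ne (s st : ℝ) (hst : 0 < st) (hss : st < s) {w : ℂ} (hw : ‖w‖ = 1) :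
    (s:ℂ) - (st:ℂ) * w ≠ 0 := by
  intro e
  have h1 : (s:ℂ) = (st:ℂ) * w := by linear_combination e
  have h2 := congrArg norm h1
  rw [norm_mul, hw, mul_one, Complex.norm_real, Complex.norm_real] at h2
  rw [Real.norm_eq_abs, Real.norm_eq_abs, abs_of_pos (hst.trans hss), abs_of_pos hst] at h2
  exact absurd h2 (ne_of_gt hss)

lemma denom_ne2 (s st : ℝ) (hst : 0 < st) (hss : st < s) {w : ℂ} (hw : ‖w‖ = 1) :
    (s:ℂ) * w - (st:ℂ) ≠ 0 := by
  intro e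
  have h1 : (s:ℂ) * w = (st:ℂ) := by linear_combination e
  have h2 := congrArg norm h1
  rw [norm_mul, hw, mul_one, Complex.norm_real, Complex.norm_real] at h2
  rw [Real.norm_eq_abs, Real.norm_eq_abs, abs_of_pos (hst.trans hss), abs_of_pos hst] at h2
  exact absurd h2 (ne_of_gt hss)



lemma integrable_of_bdd {F : Tc → ℂ} (hF : AEStronglyMeasurable F haarT) (C : ℝ)
    (hbd : ∀ᵐ x ∂haarT, ‖F x‖ ≤ C) : Integrable F haarT :=
  (MemLp.of_bound hF C hbd : MemLp F 1 haarT).integrable le_rfl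

lemma integrable_conj {F : Tc → ℂ} (hF : Integrable F haarT) :
    Integrable (fun x => conj (F x)) haarT := by
  refine hF.norm.mono' (aesm_conj hF.aestronglyMeasurable) ?_
  filter_upwards with x
  rw [RCLike.norm_conj]

lemma fc_finset_sum (k : ℕ) (F : ℕ → Tc → ℂ) (hint : ∀ j, Integrable (F j) haarT) (n : ℤ) :
    fourierCoeff (fun x => ∑ j ∈ Finset.range k, F j x) n
      = ∑ j ∈ Finset.range k, fourierCoeff (F j) n := by
  induction k with
  | zero =>
    simp only [Finset.range_zero, Finset.sum_empty]
    rw [fc_mul']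
    simp
  | succ k ih =>
    have e : (fun x => ∑ j ∈ Finset.range (k+1), F j x)
        = fun x => (∑ j ∈ Finset.range k, F j x) + F k x := by
      funext x; rw [Finset.sum_range_succ]
    rw [e, fc_add (integrable_finset_sum _ fun j _ => hint j) (hint k), ih,
      Finset.sum_range_succ]

lemma innerF_mul {θ₁ θ₂ : Tc → ℂ} (h1 : IsInnerF θ₁) (h2 : IsInnerF θ₂) :
    IsInnerF (fun x => θ₁ x * θ₂ x) :=
  ⟨h1.1.mul h2.1,
   (h1.2.1.and h2.2.1).mono fun x hx => by rw [norm_mul, hx.1, hx.2, mul_one],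
   fc_mul_hardy (innerF_memLp h1) (innerF_memLp h2) h1.2.2 h2.2.2⟩

lemma innerF_fourier1 : IsInnerF (fun x : Tc => fourier 1 x) := by
  refine ⟨(map_continuous (fourier 1)).aestronglyMeasurable,
    Filter.Eventually.of_forall (norm_fourier1 1), fun n hn => ?_⟩
  have e : (fun x : Tc => fourier 1 x) = (⇑(fourier (T := 2*π) 1) : Tc → ℂ) := rfl
  rw [e, fc_fourier]
  exact if_neg (by omega)

lemma innerF_pow {θ : Tc → ℂ} (hθ : IsInnerF θ) (k : ℕ) : IsInnerF (fun x => θ x ^ k) := by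
  induction k with
  | zero =>
    refine ⟨aestronglyMeasurable_const, Filter.Eventually.of_forall fun x => by simp,
      fun n hn => ?_⟩
    have e : (fun x : Tc => θ x ^ 0) = fun _ : Tc => (1:ℂ) := by funext x; rw [pow_zero]
    rw [e, fc_one]
    exact if_neg (by omega)
  | succ k ih =>
    have e : (fun x => θ x ^ (k+1)) = fun x => θ x * θ x ^ k := by funext x; ring
    rw [e]
    exact innerF_mul hθ ih

section Alg

variable {s st : ℝ} {a b c : ℂ}

lemma norm_abc (ha : ‖a‖ = 1) (hb : ‖b‖ = 1) (hc : ‖c‖ = 1) : ‖a * b * c‖ = 1 := by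
  rw [norm_mul, norm_mul, ha, hb, hc]; ring

lemma hD_ne (hst : 0 < st) (hss : st < s) (ha : ‖a‖ = 1) (hb : ‖b‖ = 1) (hc : ‖c‖ = 1) :
    (s:ℂ) - (st:ℂ)*a*b*c ≠ 0 := by
  intro e
  exact denom_ne s st hst hss (norm_abc ha hb hc) (by linear_combination e)

lemma hE_ne (hst : 0 < st) (hss : st < s) (ha : ‖a‖ = 1) (hb : ‖b‖ = 1) (hc : ‖c‖ = 1) :
    (s:ℂ)*(a*b*c) - (st:ℂ) ≠ 0 :=
  denom_ne2 s st hst hss (norm_abc ha hb hc)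

lemma conj_invD (hst : 0 < st) (hss : st < s) (ha : ‖a‖ = 1) (hb : ‖b‖ = 1) (hc : ‖c‖ = 1) :
    conj (1/((s:ℂ) - (st:ℂ)*a*b*c)) = (a*b*c)/((s:ℂ)*(a*b*c) - (st:ℂ)) := by
  have ha0 := ne_zero_of_norm_one ha
  have hb0 := ne_zero_of_norm_one hb
  have hc0 := ne_zero_of_norm_one hc
  have hE := hE_ne hst hss ha hb hc
  have hX : (s:ℂ) - (st:ℂ)*a⁻¹*b⁻¹*c⁻¹ ≠ 0 := by
    intro e
    refine denom_ne s st hst hss (w := a⁻¹*b⁻¹*c⁻¹) ?_ (by linear_combination e)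
    rw [norm_mul, norm_mul, norm_inv, norm_inv, norm_inv, ha, hb, hc]; norm_num
  simp only [map_div₀, map_one, map_sub, map_mul, conj_ofReal]
  rw [conj_of_norm_one ha, conj_of_norm_one hb, conj_of_norm_one hc, div_eq_div_iff hX hE]
  field_simp
  all_goals ring

lemma alg1 (hst : 0 < st) (hss : st < s) (ha : ‖a‖ = 1) (hb : ‖b‖ = 1) (hc : ‖c‖ = 1) :
    ((s:ℂ)^2 - (st:ℂ)^2) * b / ((s:ℂ) - (st:ℂ)*a*b*c) * conj (1/((s:ℂ) - (st:ℂ)*a*b*c))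
      = (s:ℂ)*(b*(1/((s:ℂ) - (st:ℂ)*a*b*c)))
        + (st:ℂ) * conj (a * (c * (1/((s:ℂ) - (st:ℂ)*a*b*c)))) := by
  have ha0 := ne_zero_of_norm_one ha
  have hb0 := ne_zero_of_norm_one hb
  have hc0 := ne_zero_of_norm_one hc
  have hD := hD_ne hst hss ha hb hc
  have hE := hE_ne hst hss ha hb hc
  have hu' : ((s:ℂ)^2 - (st:ℂ)^2) * b / ((s:ℂ) - (st:ℂ)*a*b*c)
      = ((s:ℂ)^2 - (st:ℂ)^2) * b * (1/((s:ℂ) - (st:ℂ)*a*b*c)) := by ring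
  rw [hu']
  simp only [map_mul, map_sub, map_pow, map_one, conj_ofReal,
    conj_invD hst hss ha hb hc, conj_of_norm_one ha, conj_of_norm_one hb, conj_of_norm_one hc]
  have hD' : (s:ℂ) - (st:ℂ)*b*a*c ≠ 0 := by
    rw [show (s:ℂ) - (st:ℂ)*b*a*c = (s:ℂ) - (st:ℂ)*a*b*c by ring]; exact hD
  have hE' : (s:ℂ)*b*a*c - (st:ℂ) ≠ 0 := by
    rw [show (s:ℂ)*b*a*c - (st:ℂ) = (s:ℂ)*(a*b*c) - (st:ℂ) by ring]; exact hE
  field_simp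
  all_goals ring

lemma alg2 (hst : 0 < st) (hss : st < s) (ha : ‖a‖ = 1) (hb : ‖b‖ = 1) (hc : ‖c‖ = 1) :
    ((s:ℂ)^2 - (st:ℂ)^2) * b / ((s:ℂ) - (st:ℂ)*a*b*c)
        * conj ((s:ℂ)*(b*(1/((s:ℂ) - (st:ℂ)*a*b*c))))
      = (s:ℂ)^2*(1/((s:ℂ) - (st:ℂ)*a*b*c))
        + (s:ℂ)*(st:ℂ)*conj (a * (b * (c * (1/((s:ℂ) - (st:ℂ)*a*b*c))))) := by
  have ha0 := ne_zero_of_norm_one ha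
  have hb0 := ne_zero_of_norm_one hb
  have hc0 := ne_zero_of_norm_one hc
  have hD := hD_ne hst hss ha hb hc
  have hE := hE_ne hst hss ha hb hc
  have hu' : ((s:ℂ)^2 - (st:ℂ)^2) * b / ((s:ℂ) - (st:ℂ)*a*b*c)
      = ((s:ℂ)^2 - (st:ℂ)^2) * b * (1/((s:ℂ) - (st:ℂ)*a*b*c)) := by ring
  rw [hu']
  simp only [map_mul, map_sub, map_pow, map_one, conj_ofReal,
    conj_invD hst hss ha hb hc, conj_of_norm_one ha, conj_of_norm_one hb, conj_of_norm_one hc]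
  have hD' : (s:ℂ) - (st:ℂ)*b*a*c ≠ 0 := by
    rw [show (s:ℂ) - (st:ℂ)*b*a*c = (s:ℂ) - (st:ℂ)*a*b*c by ring]; exact hD
  have hE' : (s:ℂ)*b*a*c - (st:ℂ) ≠ 0 := by
    rw [show (s:ℂ)*b*a*c - (st:ℂ) = (s:ℂ)*(a*b*c) - (st:ℂ) by ring]; exact hE
  field_simp
  all_goals ring

lemma alg3 (hst : 0 < st) (hss : st < s) (ha : ‖a‖ = 1) (hb : ‖b‖ = 1) (hc : ‖c‖ = 1) :
    ((s:ℂ)^2 - (st:ℂ)^2) * b / ((s:ℂ) - (st:ℂ)*a*b*c)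
        * conj (((s:ℂ)^2 - (st:ℂ)^2) * b / ((s:ℂ) - (st:ℂ)*a*b*c))
      = (s:ℂ)*((s:ℂ)^2 - (st:ℂ)^2)*(1/((s:ℂ) - (st:ℂ)*a*b*c))
        + (st:ℂ)*((s:ℂ)^2 - (st:ℂ)^2)
            *conj (a * (b * (c * (1/((s:ℂ) - (st:ℂ)*a*b*c))))) := by
  have ha0 := ne_zero_of_norm_one ha
  have hb0 := ne_zero_of_norm_one hb
  have hc0 := ne_zero_of_norm_one hc
  have hD := hD_ne hst hss ha hb hc
  have hE := hE_ne hst hss ha hb hc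
  have hu' : ((s:ℂ)^2 - (st:ℂ)^2) * b / ((s:ℂ) - (st:ℂ)*a*b*c)
      = ((s:ℂ)^2 - (st:ℂ)^2) * b * (1/((s:ℂ) - (st:ℂ)*a*b*c)) := by ring
  rw [hu']
  simp only [map_mul, map_sub, map_pow, map_one, conj_ofReal,
    conj_invD hst hss ha hb hc, conj_of_norm_one ha, conj_of_norm_one hb, conj_of_norm_one hc]
  have hD' : (s:ℂ) - (st:ℂ)*b*a*c ≠ 0 := by
    rw [show (s:ℂ) - (st:ℂ)*b*a*c = (s:ℂ) - (st:ℂ)*a*b*c by ring]; exact hD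
  have hE' : (s:ℂ)*b*a*c - (st:ℂ) ≠ 0 := by
    rw [show (s:ℂ)*b*a*c - (st:ℂ) = (s:ℂ)*(a*b*c) - (st:ℂ) by ring]; exact hE
  field_simp
  all_goals ring

lemma alg4 (hst : 0 < st) (hss : st < s) (ha : ‖a‖ = 1) (hb : ‖b‖ = 1) (hc : ‖c‖ = 1) :
    ((s:ℂ)^2 - (st:ℂ)^2) * b / ((s:ℂ) - (st:ℂ)*a*b*c)
        * conj ((st:ℂ)*(c*(((s:ℂ)^2 - (st:ℂ)^2) * b / ((s:ℂ) - (st:ℂ)*a*b*c))))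
      = (s:ℂ)*(st:ℂ)*((s:ℂ)^2 - (st:ℂ)^2)*(conj c * (1/((s:ℂ) - (st:ℂ)*a*b*c)))
        + (st:ℂ)^2*((s:ℂ)^2 - (st:ℂ)^2)
            *conj (a * (b * (c * (c * (1/((s:ℂ) - (st:ℂ)*a*b*c)))))) := by
  have ha0 := ne_zero_of_norm_one ha
  have hb0 := ne_zero_of_norm_one hb
  have hc0 := ne_zero_of_norm_one hc
  have hD := hD_ne hst hss ha hb hc
  have hE := hE_ne hst hss ha hb hc
  have hu' : ((s:ℂ)^2 - (st:ℂ)^2) * b / ((s:ℂ) - (st:ℂ)*a*b*c)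
      = ((s:ℂ)^2 - (st:ℂ)^2) * b * (1/((s:ℂ) - (st:ℂ)*a*b*c)) := by ring
  rw [hu']
  simp only [map_mul, map_sub, map_pow, map_one, conj_ofReal,
    conj_invD hst hss ha hb hc, conj_of_norm_one ha, conj_of_norm_one hb, conj_of_norm_one hc]
  have hD' : (s:ℂ) - (st:ℂ)*b*a*c ≠ 0 := by
    rw [show (s:ℂ) - (st:ℂ)*b*a*c = (s:ℂ) - (st:ℂ)*a*b*c by ring]; exact hD
  have hE' : (s:ℂ)*b*a*c - (st:ℂ) ≠ 0 := by
    rw [show (s:ℂ)*b*a*c - (st:ℂ) = (s:ℂ)*(a*b*c) - (st:ℂ) by ring]; exact hE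
  field_simp
  all_goals ring

lemma alg5 (hst : 0 < st) (hss : st < s) (ha : ‖a‖ = 1) (hb : ‖b‖ = 1) (hc : ‖c‖ = 1) :
    (s:ℂ)*(1/((s:ℂ) - (st:ℂ)*a*b*c))
      = 1 + (st:ℂ)*(a * (b * (c * (1/((s:ℂ) - (st:ℂ)*a*b*c))))) := by
  have hD := hD_ne hst hss ha hb hc
  field_simp
  ring

lemma alg6 (hst : 0 < st) (hss : st < s) (ha : ‖a‖ = 1) (hb : ‖b‖ = 1) (hc : ‖c‖ = 1) :
    (s:ℂ)*(conj c * (1/((s:ℂ) - (st:ℂ)*a*b*c)))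
      = conj c + (st:ℂ)*(a * (b * (1/((s:ℂ) - (st:ℂ)*a*b*c)))) := by
  have hc0 := ne_zero_of_norm_one hc
  have hD := hD_ne hst hss ha hb hc
  rw [conj_of_norm_one hc]
  have hD' : (s:ℂ) - c*(st:ℂ)*a*b ≠ 0 := by
    rw [show (s:ℂ) - c*(st:ℂ)*a*b = (s:ℂ) - (st:ℂ)*a*b*c by ring]; exact hD
  field_simp
  ring

lemma alg7 (hst : 0 < st) (hss : st < s) (ha : ‖a‖ = 1) (hb : ‖b‖ = 1) (hc : ‖c‖ = 1)
    (k : ℕ) :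
    1/((s:ℂ) - (st:ℂ)*a*b*c)
      = (∑ j ∈ Finset.range k, (st:ℂ)^j/(s:ℂ)^(j+1) * (a*(b*c))^j)
        + ((st:ℂ)/(s:ℂ))^k * ((a*(b*c))^k * (1/((s:ℂ) - (st:ℂ)*a*b*c))) := by
  have hD := hD_ne hst hss ha hb hc
  have hs0 : (s:ℂ) ≠ 0 := by
    norm_cast
    exact ne_of_gt (hst.trans hss)
  induction k with
  | zero => simp
  | succ k ih =>
    conv_lhs => rw [ih]
    have step : ((st:ℂ)/(s:ℂ))^k * ((a*(b*c))^k * (1/((s:ℂ) - (st:ℂ)*a*b*c)))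
        = (st:ℂ)^k/(s:ℂ)^(k+1) * (a*(b*c))^k
          + ((st:ℂ)/(s:ℂ))^(k+1) * ((a*(b*c))^(k+1) * (1/((s:ℂ) - (st:ℂ)*a*b*c))) := by
      have hinv : ((s:ℂ) - (st:ℂ)*a*b*c) * (1/((s:ℂ) - (st:ℂ)*a*b*c)) = 1 :=
        mul_one_div_cancel hD
      have hs1 : (s:ℂ) * (1/(s:ℂ)) = 1 := mul_one_div_cancel hs0
      have key : 1/((s:ℂ) - (st:ℂ)*a*b*c)
          = 1/(s:ℂ) + (st:ℂ)/(s:ℂ) * (a*(b*c)) * (1/((s:ℂ) - (st:ℂ)*a*b*c)) := by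
        linear_combination (1/(s:ℂ)) * hinv - (1/((s:ℂ) - (st:ℂ)*a*b*c)) * hs1
      linear_combination ((st:ℂ)/(s:ℂ))^k * (a*(b*c))^k * key
    conv_lhs => rw [step]
    rw [Finset.sum_range_succ]
    ring

end Alg

/-- for `s > s̃ > 0` and inner functions `ψ, ψ̃`, the symbol
`u = (s² - s̃²)ψ/(s - s̃ z ψ ψ̃)` and `h = 1/(s - s̃ z ψ ψ̃)` satisfy
`H_u h = sψh`, `H_u² h = s²h`, `K_u u = s̃ψ̃u` and `K_u² u = s̃²u`. -/
theorem example_two_singular_values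
    (s st : ℝ) (hst : 0 < st) (hss : st < s)
    (ψ ψt : Tc → ℂ) (hψ : IsInnerF ψ) (hψt : IsInnerF ψt)
    (u h : HL2)
    (hu : ⇑u =ᵐ[haarT] fun x =>
      ((s : ℂ) ^ 2 - (st : ℂ) ^ 2) * ψ x / ((s : ℂ) - (st : ℂ) * fourier 1 x * ψ x * ψt x))
    (hh : ⇑h =ᵐ[haarT] fun x =>
      1 / ((s : ℂ) - (st : ℂ) * fourier 1 x * ψ x * ψt x))
    (H K : HL2 → HL2) (hH : IsHankelOp (⇑u) H) (hK : IsShiftAdjOf H K) :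
    (⇑(H h) =ᵐ[haarT] fun x => (s : ℂ) * ψ x * h x) ∧
    H (H h) = ((s : ℂ) ^ 2) • h ∧
    (⇑(K u) =ᵐ[haarT] fun x => (st : ℂ) * ψt x * u x) ∧
    K (K u) = ((st : ℂ) ^ 2) • u := by
  have hae : ∀ᵐ x ∂haarT, ‖ψ x‖ = 1 ∧ ‖ψt x‖ = 1 := hψ.2.1.and hψt.2.1
  have hmh : MemLp (⇑h) 2 haarT := Lp.memLp h
  have hih : Integrable (⇑h) haarT := hmh.integrable one_le_two
  have hmu : MemLp (⇑u) 2 haarT := Lp.memLp u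
  have hsne : (0:ℝ) < s := hst.trans hss
  -- u is bounded a.e.
  have hub : ∀ᵐ x ∂haarT, ‖(⇑u) x‖ ≤ s + st := by
    filter_upwards [hae, hu] with x hx hux
    obtain ⟨hb, hc⟩ := hx
    have ha := norm_fourier1 1 x
    rw [hux]
    have h1 : ‖(st:ℂ) * fourier 1 x * ψ x * ψt x‖ = st := by
      rw [norm_mul, norm_mul, norm_mul, ha, hb, hc, Complex.norm_real,
        Real.norm_eq_abs, abs_of_pos hst]
      ring
    have hDn : s - st ≤ ‖(s:ℂ) - (st:ℂ) * fourier 1 x * ψ x * ψt x‖ := by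
      calc s - st = ‖(s:ℂ)‖ - ‖(st:ℂ) * fourier 1 x * ψ x * ψt x‖ := by
            rw [h1, Complex.norm_real, Real.norm_eq_abs, abs_of_pos hsne]
        _ ≤ _ := norm_sub_norm_le _ _
    have hD0 : (0:ℝ) < ‖(s:ℂ) - (st:ℂ) * fourier 1 x * ψ x * ψt x‖ :=
      lt_of_lt_of_le (by linarith) hDn
    rw [norm_div, norm_mul]
    have h2 : ‖((s:ℂ)^2 - (st:ℂ)^2)‖ = s^2 - st^2 := by
      rw [show ((s:ℂ)^2 - (st:ℂ)^2) = ((s^2 - st^2 : ℝ) : ℂ) by push_cast; ring,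
        Complex.norm_real, Real.norm_eq_abs, abs_of_pos (by nlinarith)]
    rw [h2, hb, mul_one, div_le_iff₀ hD0]
    nlinarith [hDn]
  -- integrability of the pairing integrand
  have hint : ∀ f g : HL2,
      Integrable (fun x => (⇑u) x * conj ((⇑f) x) * conj ((⇑g) x)) haarT := by
    intro f g
    have hfg : Integrable (fun x => conj ((⇑f) x) * (⇑g) x) haarT := by
      have := MeasureTheory.L2.integrable_inner (𝕜 := ℂ) f g
      simpa [RCLike.inner_apply, mul_comm] using this
    refine (hfg.norm.const_mul (s + st)).mono'
      (((Lp.aestronglyMeasurable u).mul (aesm_conj (Lp.aestronglyMeasurable f))).mul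
        (aesm_conj (Lp.aestronglyMeasurable g))) ?_
    filter_upwards [hub] with x hx
    have h3 : ‖(⇑u) x * conj ((⇑f) x) * conj ((⇑g) x)‖
        = ‖(⇑u) x‖ * ‖(⇑f) x‖ * ‖(⇑g) x‖ := by
      rw [norm_mul, norm_mul, RCLike.norm_conj, RCLike.norm_conj]
    have h4 : ‖conj ((⇑f) x) * (⇑g) x‖ = ‖(⇑f) x‖ * ‖(⇑g) x‖ := by
      rw [norm_mul, RCLike.norm_conj]
    rw [h3, h4]
    nlinarith [norm_nonneg ((⇑f) x), norm_nonneg ((⇑g) x), norm_nonneg ((⇑u) x),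
      mul_nonneg (norm_nonneg ((⇑f) x)) (norm_nonneg ((⇑g) x))]
  -- master coefficient formula for H
  have coeffH : ∀ (f : HL2) (m : ℤ), 0 ≤ m →
      fourierCoeff (⇑(H f)) m = fourierCoeff (fun x => (⇑u) x * conj ((⇑f) x)) m := by
    intro f m hm
    have hg : IsHardy (fourierLp (T := 2*π) 2 m) := by
      intro n hn
      rw [fc_fourierLp]
      exact if_neg (by omega)
    have pair := hH.2.2.2.2.2.2 f (fourierLp 2 m) hg (hint f _)
    have l1 : (inner ℂ (fourierLp (T := 2*π) 2 m) (H f) : ℂ) = fourierCoeff (⇑(H f)) m := by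
      rw [← fourierBasis_repr (H f) m, fourierBasis.repr_apply_apply]
      congr 1
      exact (congrFun coe_fourierBasis m).symm
    have l2 : (∫ x, (⇑u) x * conj ((⇑f) x) * conj ((⇑(fourierLp (T := 2*π) 2 m)) x) ∂haarT)
        = fourierCoeff (fun x => (⇑u) x * conj ((⇑f) x)) m := by
      rw [fc_mul']
      refine integral_congr_ae ?_
      filter_upwards [coeFn_fourierLp (T := 2*π) 2 m] with x hx
      rw [hx, ← fourier_neg]
      ring
    rw [← l1, pair, l2]
  -- the inner function ζ = z ψ ψt and its powers
  have hζ : IsInnerF (fun x => fourier 1 x * (ψ x * ψt x)) :=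
    innerF_mul innerF_fourier1 (innerF_mul hψ hψt)
  have hζpow : ∀ k : ℕ, IsInnerF (fun x => (fourier 1 x * (ψ x * ψt x)) ^ k) :=
    fun k => innerF_pow hζ k
  -- h is a Hardy function
  have hhH : IsHardyFun (⇑h) := by
    intro n hn
    have hbd : ∀ k : ℕ, ‖fourierCoeff (⇑h) n‖ ≤ (st/s)^k * ∫ x, ‖(⇑h) x‖ ∂haarT := by
      intro k
      have hiden : (⇑h) =ᵐ[haarT] fun x =>
          (∑ j ∈ Finset.range k, (st:ℂ)^j/(s:ℂ)^(j+1) * (fourier 1 x * (ψ x * ψt x))^j)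
          + ((st:ℂ)/(s:ℂ))^k * ((fourier 1 x * (ψ x * ψt x))^k * (⇑h) x) := by
        filter_upwards [hae, hh] with x hx hhx
        obtain ⟨hb, hc⟩ := hx
        rw [hhx]
        exact alg7 hst hss (norm_fourier1 1 x) hb hc k
      have hIsum : Integrable (fun x =>
          ∑ j ∈ Finset.range k, (st:ℂ)^j/(s:ℂ)^(j+1) * (fourier 1 x * (ψ x * ψt x))^j)
          haarT := by
        refine integrable_finset_sum _ fun j _ => ?_
        exact (integrable_of_bdd (hζpow j).1 1
          ((hζpow j).2.1.mono fun x hx => hx.le)).const_mul _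
      have hIrest : Integrable (fun x =>
          ((st:ℂ)/(s:ℂ))^k * ((fourier 1 x * (ψ x * ψt x))^k * (⇑h) x)) haarT :=
        (integrable_bdd_mul (hζpow k).1 ((hζpow k).2.1.mono fun x hx => hx.le)
          hih).const_mul _
      have e2 : fourierCoeff (fun x =>
          (∑ j ∈ Finset.range k, (st:ℂ)^j/(s:ℂ)^(j+1) * (fourier 1 x * (ψ x * ψt x))^j)
          + ((st:ℂ)/(s:ℂ))^k * ((fourier 1 x * (ψ x * ψt x))^k * (⇑h) x)) n
          = fourierCoeff (fun x =>
            ∑ j ∈ Finset.range k, (st:ℂ)^j/(s:ℂ)^(j+1) * (fourier 1 x * (ψ x * ψt x))^j) n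
          + fourierCoeff (fun x =>
            ((st:ℂ)/(s:ℂ))^k * ((fourier 1 x * (ψ x * ψt x))^k * (⇑h) x)) n :=
        fc_add hIsum hIrest n
      have e3 : fourierCoeff (fun x =>
          ∑ j ∈ Finset.range k, (st:ℂ)^j/(s:ℂ)^(j+1) * (fourier 1 x * (ψ x * ψt x))^j) n
          = ∑ j ∈ Finset.range k, fourierCoeff
              (fun x => (st:ℂ)^j/(s:ℂ)^(j+1) * (fourier 1 x * (ψ x * ψt x))^j) n :=
        fc_finset_sum k _ (fun j => (integrable_of_bdd (hζpow j).1 1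
          ((hζpow j).2.1.mono fun x hx => hx.le)).const_mul _) n
      have e4 : ∀ j ∈ Finset.range k, fourierCoeff
          (fun x => (st:ℂ)^j/(s:ℂ)^(j+1) * (fourier 1 x * (ψ x * ψt x))^j) n = 0 := by
        intro j _
        have e5 : fourierCoeff
            (fun x => (st:ℂ)^j/(s:ℂ)^(j+1) * (fourier 1 x * (ψ x * ψt x))^j) n
            = (st:ℂ)^j/(s:ℂ)^(j+1)
              * fourierCoeff (fun x => (fourier 1 x * (ψ x * ψt x))^j) n :=
          fc_const_mul _ _ n
        rw [e5, (hζpow j).2.2 n hn, mul_zero]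
      have e6 : fourierCoeff (fun x =>
          ((st:ℂ)/(s:ℂ))^k * ((fourier 1 x * (ψ x * ψt x))^k * (⇑h) x)) n
          = ((st:ℂ)/(s:ℂ))^k
            * fourierCoeff (fun x => (fourier 1 x * (ψ x * ψt x))^k * (⇑h) x) n :=
        fc_const_mul _ _ n
      have e7 : fourierCoeff (⇑h) n = ((st:ℂ)/(s:ℂ))^k
          * fourierCoeff (fun x => (fourier 1 x * (ψ x * ψt x))^k * (⇑h) x) n := by
        rw [fc_congr hiden, e2, e3, Finset.sum_congr rfl e4, Finset.sum_const_zero,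
          zero_add, e6]
      rw [e7, norm_mul]
      have hnn : ‖((st:ℂ)/(s:ℂ))^k‖ = (st/s)^k := by
        rw [norm_pow, show ((st:ℂ)/(s:ℂ)) = ((st/s : ℝ):ℂ) by push_cast; ring,
          Complex.norm_real, Real.norm_eq_abs, _root_.abs_of_nonneg (div_nonneg hst.le hsne.le)]
      rw [hnn]
      refine mul_le_mul_of_nonneg_left ?_ (by positivity)
      refine (norm_fc_le _ n).trans_eq ?_
      refine integral_congr_ae ?_
      filter_upwards [(hζpow k).2.1] with x hx
      rw [norm_mul, hx, one_mul]
    have hlt : st/s < 1 := (div_lt_one hsne).mpr hss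
    have h0 : Filter.Tendsto (fun k : ℕ => (st/s)^k * ∫ x, ‖(⇑h) x‖ ∂haarT)
        Filter.atTop (nhds 0) := by
      have := tendsto_pow_atTop_nhds_zero_of_lt_one (by positivity : (0:ℝ) ≤ st/s) hlt
      simpa using this.mul_const (∫ x, ‖(⇑h) x‖ ∂haarT)
    have hle : ‖fourierCoeff (⇑h) n‖ ≤ 0 :=
      ge_of_tendsto h0 (Filter.Eventually.of_forall hbd)
    simpa using norm_le_zero_iff.mp hle
  -- Hardy products
  have hψh_m : MemLp (fun x => ψ x * (⇑h) x) 2 haarT := innerF_mul_memLp hψ hmh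
  have hψh_H : IsHardyFun (fun x => ψ x * (⇑h) x) := innerF_mul_hardy hψ hmh hhH
  have hψth_m : MemLp (fun x => ψt x * (⇑h) x) 2 haarT := innerF_mul_memLp hψt hmh
  have hψth_H : IsHardyFun (fun x => ψt x * (⇑h) x) := innerF_mul_hardy hψt hmh hhH
  have hψψth_m : MemLp (fun x => ψ x * (ψt x * (⇑h) x)) 2 haarT :=
    innerF_mul_memLp hψ hψth_m
  have hψψth_H : IsHardyFun (fun x => ψ x * (ψt x * (⇑h) x)) :=
    innerF_mul_hardy hψ hψth_m hψth_H
  have hψtψth_m : MemLp (fun x => ψt x * (ψt x * (⇑h) x)) 2 haarT :=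
    innerF_mul_memLp hψt hψth_m
  have hψψtψth_H : IsHardyFun (fun x => ψ x * (ψt x * (ψt x * (⇑h) x))) :=
    innerF_mul_hardy hψ hψtψth_m (innerF_mul_hardy hψt hψth_m hψth_H)
  -- vanishing of conjugate coefficients
  have v1 : ∀ m : ℤ, 0 ≤ m →
      fourierCoeff (fun x => conj (fourier 1 x * (ψt x * (⇑h) x))) m = 0 := by
    intro m hm
    have e1 : fourierCoeff (fun x => conj (fourier 1 x * (ψt x * (⇑h) x))) m
        = conj (fourierCoeff (fun x => fourier 1 x * (ψt x * (⇑h) x)) (-m)) := fc_conj' _ m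
    have e2 : fourierCoeff (fun x => fourier 1 x * (ψt x * (⇑h) x)) (-m)
        = fourierCoeff (fun x => ψt x * (⇑h) x) (-m - 1) := fc_shiftk 1 _ (-m)
    rw [e1, e2, hψth_H (-m - 1) (by omega), map_zero]
  have v2 : ∀ m : ℤ, 0 ≤ m →
      fourierCoeff (fun x => conj (fourier 1 x * (ψ x * (ψt x * (⇑h) x)))) m = 0 := by
    intro m hm
    have e1 : fourierCoeff (fun x => conj (fourier 1 x * (ψ x * (ψt x * (⇑h) x)))) m
        = conj (fourierCoeff (fun x => fourier 1 x * (ψ x * (ψt x * (⇑h) x))) (-m)) :=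
      fc_conj' _ m
    have e2 : fourierCoeff (fun x => fourier 1 x * (ψ x * (ψt x * (⇑h) x))) (-m)
        = fourierCoeff (fun x => ψ x * (ψt x * (⇑h) x)) (-m - 1) := fc_shiftk 1 _ (-m)
    rw [e1, e2, hψψth_H (-m - 1) (by omega), map_zero]
  have v3 : ∀ m : ℤ, 0 ≤ m →
      fourierCoeff (fun x => conj (fourier 1 x * (ψ x * (ψt x * (ψt x * (⇑h) x))))) m
        = 0 := by
    intro m hm
    have e1 : fourierCoeff (fun x => conj (fourier 1 x * (ψ x * (ψt x * (ψt x * (⇑h) x))))) m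
        = conj (fourierCoeff
            (fun x => fourier 1 x * (ψ x * (ψt x * (ψt x * (⇑h) x)))) (-m)) :=
      fc_conj' _ m
    have e2 : fourierCoeff (fun x => fourier 1 x * (ψ x * (ψt x * (ψt x * (⇑h) x)))) (-m)
        = fourierCoeff (fun x => ψ x * (ψt x * (ψt x * (⇑h) x))) (-m - 1) :=
      fc_shiftk 1 _ (-m)
    rw [e1, e2, hψψtψth_H (-m - 1) (by omega), map_zero]
  -- PART 1
  have keyae1 : (fun x => (⇑u) x * conj ((⇑h) x)) =ᵐ[haarT]
      fun x => (s:ℂ) * (ψ x * (⇑h) x)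
        + (st:ℂ) * conj (fourier 1 x * (ψt x * (⇑h) x)) := by
    filter_upwards [hae, hu, hh] with x hx hux hhx
    obtain ⟨hb, hc⟩ := hx
    rw [hux, hhx]
    exact alg1 hst hss (norm_fourier1 1 x) hb hc
  have hA'm : MemLp (fun x => (s:ℂ) * (ψ x * (⇑h) x)) 2 haarT := hψh_m.const_mul _
  have hA'H : IsHardyFun (fun x => (s:ℂ) * (ψ x * (⇑h) x)) := by
    intro n hn
    have e1 : fourierCoeff (fun x => (s:ℂ) * (ψ x * (⇑h) x)) n
        = (s:ℂ) * fourierCoeff (fun x => ψ x * (⇑h) x) n := fc_const_mul _ _ n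
    rw [e1, hψh_H n hn, mul_zero]
  have hIψh : Integrable (fun x => ψ x * (⇑h) x) haarT :=
    integrable_bdd_mul hψ.1 (hψ.2.1.mono fun x hx => hx.le) hih
  have hIψth : Integrable (fun x => ψt x * (⇑h) x) haarT :=
    integrable_bdd_mul hψt.1 (hψt.2.1.mono fun x hx => hx.le) hih
  have hIzψth : Integrable (fun x => fourier 1 x * (ψt x * (⇑h) x)) haarT :=
    integrable_bdd_mul (map_continuous (fourier 1)).aestronglyMeasurable
      (Filter.Eventually.of_forall fun x => (norm_fourier1 1 x).le) hIψth
  have hIψψth : Integrable (fun x => ψ x * (ψt x * (⇑h) x)) haarT :=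
    integrable_bdd_mul hψ.1 (hψ.2.1.mono fun x hx => hx.le) hIψth
  have hIzψψth : Integrable (fun x => fourier 1 x * (ψ x * (ψt x * (⇑h) x))) haarT :=
    integrable_bdd_mul (map_continuous (fourier 1)).aestronglyMeasurable
      (Filter.Eventually.of_forall fun x => (norm_fourier1 1 x).le) hIψψth
  have eq1 : H h = hA'm.toLp _ := by
    apply HL2_ext
    intro n
    rcases lt_or_ge n 0 with hn | hn
    · rw [hH.2.2.2.2.2.1 h n hn, fc_congr hA'm.coeFn_toLp, hA'H n hn]
    · have e1 : fourierCoeff (fun x => (s:ℂ) * (ψ x * (⇑h) x)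
          + (st:ℂ) * conj (fourier 1 x * (ψt x * (⇑h) x))) n
          = fourierCoeff (fun x => (s:ℂ) * (ψ x * (⇑h) x)) n
            + fourierCoeff (fun x => (st:ℂ) * conj (fourier 1 x * (ψt x * (⇑h) x))) n :=
        fc_add (hIψh.const_mul _) ((integrable_conj hIzψth).const_mul _) n
      have e2 : fourierCoeff (fun x => (st:ℂ) * conj (fourier 1 x * (ψt x * (⇑h) x))) n
          = (st:ℂ) * fourierCoeff (fun x => conj (fourier 1 x * (ψt x * (⇑h) x))) n :=
        fc_const_mul _ _ n
      rw [coeffH h n hn, fc_congr keyae1, e1, e2, v1 n hn, mul_zero, add_zero,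
        fc_congr hA'm.coeFn_toLp]
  have conj1 : ⇑(H h) =ᵐ[haarT] fun x => (s:ℂ) * (ψ x * (⇑h) x) := by
    rw [eq1]
    exact hA'm.coeFn_toLp
  have part1 : ⇑(H h) =ᵐ[haarT] fun x => (s:ℂ) * ψ x * (⇑h) x := by
    rw [show (fun x => (s:ℂ) * ψ x * (⇑h) x) = fun x => (s:ℂ) * (ψ x * (⇑h) x) from
      funext fun x => by ring]
    exact conj1
  -- PART 2
  have keyae2 : (fun x => (⇑u) x * conj ((⇑(H h)) x)) =ᵐ[haarT]
      fun x => (s:ℂ)^2 * (⇑h) x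
        + (s:ℂ)*(st:ℂ) * conj (fourier 1 x * (ψ x * (ψt x * (⇑h) x))) := by
    filter_upwards [hae, hu, hh, conj1] with x hx hux hhx hHhx
    obtain ⟨hb, hc⟩ := hx
    rw [hHhx, hux, hhx]
    exact alg2 hst hss (norm_fourier1 1 x) hb hc
  have eq2 : H (H h) = ((s:ℂ)^2) • h := by
    apply HL2_ext
    intro n
    rcases lt_or_ge n 0 with hn | hn
    · rw [hH.2.2.2.2.2.1 (H h) n hn, fcL_smul, hhH n hn, mul_zero]
    · have e1 : fourierCoeff (fun x => (s:ℂ)^2 * (⇑h) x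
          + (s:ℂ)*(st:ℂ) * conj (fourier 1 x * (ψ x * (ψt x * (⇑h) x)))) n
          = fourierCoeff (fun x => (s:ℂ)^2 * (⇑h) x) n
            + fourierCoeff (fun x =>
                (s:ℂ)*(st:ℂ) * conj (fourier 1 x * (ψ x * (ψt x * (⇑h) x)))) n :=
        fc_add (hih.const_mul _) ((integrable_conj hIzψψth).const_mul _) n
      have e2 : fourierCoeff (fun x => (s:ℂ)^2 * (⇑h) x) n
          = (s:ℂ)^2 * fourierCoeff (⇑h) n := fc_const_mul _ _ n
      have e3 : fourierCoeff (fun x =>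
          (s:ℂ)*(st:ℂ) * conj (fourier 1 x * (ψ x * (ψt x * (⇑h) x)))) n
          = (s:ℂ)*(st:ℂ)
            * fourierCoeff (fun x => conj (fourier 1 x * (ψ x * (ψt x * (⇑h) x)))) n :=
        fc_const_mul _ _ n
      rw [coeffH (H h) n hn, fc_congr keyae2, e1, e2, e3, v2 n hn, mul_zero, add_zero,
        fcL_smul]
  -- PART 3
  have relu : ⇑u =ᵐ[haarT] fun x => ((s:ℂ)^2 - (st:ℂ)^2) * (ψ x * (⇑h) x) := by
    filter_upwards [hae, hu, hh] with x hx hux hhx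
    rw [hux, hhx, div_eq_mul_one_div]
    ring
  have hψtu_m : MemLp (fun x => ψt x * (⇑u) x) 2 haarT := innerF_mul_memLp hψt hmu
  have hψtu_H : IsHardyFun (fun x => ψt x * (⇑u) x) := innerF_mul_hardy hψt hmu hH.2.1
  have hB3m : MemLp (fun x => (st:ℂ) * (ψt x * (⇑u) x)) 2 haarT := hψtu_m.const_mul _
  have relψtu : (fun x => ψt x * (⇑u) x) =ᵐ[haarT]
      fun x => ((s:ℂ)^2 - (st:ℂ)^2) * (ψ x * (ψt x * (⇑h) x)) := by
    filter_upwards [relu] with x hx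
    rw [hx]
    ring
  have keyae3 : (fun x => (⇑u) x * conj ((⇑u) x)) =ᵐ[haarT]
      fun x => (s:ℂ)*((s:ℂ)^2 - (st:ℂ)^2) * (⇑h) x
        + (st:ℂ)*((s:ℂ)^2 - (st:ℂ)^2)
            * conj (fourier 1 x * (ψ x * (ψt x * (⇑h) x))) := by
    filter_upwards [hae, hu, hh] with x hx hux hhx
    obtain ⟨hb, hc⟩ := hx
    rw [hux, hhx]
    exact alg3 hst hss (norm_fourier1 1 x) hb hc
  have rel1 : ∀ m : ℤ, m ≠ 0 → (s:ℂ) * fourierCoeff (⇑h) m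
      = (st:ℂ) * fourierCoeff (fun x => ψ x * (ψt x * (⇑h) x)) (m - 1) := by
    intro m hm
    have hae5 : (fun x => (s:ℂ) * (⇑h) x) =ᵐ[haarT]
        fun x => 1 + (st:ℂ) * (fourier 1 x * (ψ x * (ψt x * (⇑h) x))) := by
      filter_upwards [hae, hh] with x hx hhx
      obtain ⟨hb, hc⟩ := hx
      rw [hhx]
      exact alg5 hst hss (norm_fourier1 1 x) hb hc
    have e0 : (s:ℂ) * fourierCoeff (⇑h) m
        = fourierCoeff (fun x => (s:ℂ) * (⇑h) x) m := (fc_const_mul _ _ m).symm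
    have e1 : fourierCoeff (fun x =>
        1 + (st:ℂ) * (fourier 1 x * (ψ x * (ψt x * (⇑h) x)))) m
        = fourierCoeff (fun _ : Tc => (1:ℂ)) m
          + fourierCoeff (fun x =>
              (st:ℂ) * (fourier 1 x * (ψ x * (ψt x * (⇑h) x)))) m :=
      fc_add (integrable_const 1) (hIzψψth.const_mul _) m
    have e2 : fourierCoeff (fun x =>
        (st:ℂ) * (fourier 1 x * (ψ x * (ψt x * (⇑h) x)))) m
        = (st:ℂ) * fourierCoeff (fun x => fourier 1 x * (ψ x * (ψt x * (⇑h) x))) m :=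
      fc_const_mul _ _ m
    have e3 : fourierCoeff (fun x => fourier 1 x * (ψ x * (ψt x * (⇑h) x))) m
        = fourierCoeff (fun x => ψ x * (ψt x * (⇑h) x)) (m - 1) := fc_shiftk 1 _ m
    rw [e0, fc_congr hae5, e1, e2, e3, fc_one, if_neg hm, zero_add]
  have eq3 : K u = hB3m.toLp _ := by
    apply HL2_ext
    intro n
    rcases lt_or_ge n 0 with hn | hn
    · have e1 : fourierCoeff (fun x => (st:ℂ) * (ψt x * (⇑u) x)) n
          = (st:ℂ) * fourierCoeff (fun x => ψt x * (⇑u) x) n := fc_const_mul _ _ n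
      rw [(hK u).1 n hn, fc_congr hB3m.coeFn_toLp, e1, hψtu_H n hn, mul_zero]
    · have e1 : fourierCoeff (fun x => (s:ℂ)*((s:ℂ)^2 - (st:ℂ)^2) * (⇑h) x
          + (st:ℂ)*((s:ℂ)^2 - (st:ℂ)^2)
              * conj (fourier 1 x * (ψ x * (ψt x * (⇑h) x)))) (n+1)
          = fourierCoeff (fun x => (s:ℂ)*((s:ℂ)^2 - (st:ℂ)^2) * (⇑h) x) (n+1)
            + fourierCoeff (fun x => (st:ℂ)*((s:ℂ)^2 - (st:ℂ)^2)
                * conj (fourier 1 x * (ψ x * (ψt x * (⇑h) x)))) (n+1) :=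
        fc_add (hih.const_mul _) ((integrable_conj hIzψψth).const_mul _) (n+1)
      have e2 : fourierCoeff (fun x => (s:ℂ)*((s:ℂ)^2 - (st:ℂ)^2) * (⇑h) x) (n+1)
          = (s:ℂ)*((s:ℂ)^2 - (st:ℂ)^2) * fourierCoeff (⇑h) (n+1) := fc_const_mul _ _ _
      have e3 : fourierCoeff (fun x => (st:ℂ)*((s:ℂ)^2 - (st:ℂ)^2)
          * conj (fourier 1 x * (ψ x * (ψt x * (⇑h) x)))) (n+1)
          = (st:ℂ)*((s:ℂ)^2 - (st:ℂ)^2) * fourierCoeff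
              (fun x => conj (fourier 1 x * (ψ x * (ψt x * (⇑h) x)))) (n+1) :=
        fc_const_mul _ _ _
      have e4 : fourierCoeff (fun x => (st:ℂ) * (ψt x * (⇑u) x)) n
          = (st:ℂ) * fourierCoeff (fun x => ψt x * (⇑u) x) n := fc_const_mul _ _ n
      have e5 : fourierCoeff (fun x => ((s:ℂ)^2 - (st:ℂ)^2) * (ψ x * (ψt x * (⇑h) x))) n
          = ((s:ℂ)^2 - (st:ℂ)^2)
            * fourierCoeff (fun x => ψ x * (ψt x * (⇑h) x)) n := fc_const_mul _ _ n
      have hr := rel1 (n+1) (by omega)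
      rw [show (n + 1 - 1 : ℤ) = n by ring] at hr
      rw [(hK u).2 n hn, coeffH u (n+1) (by omega), fc_congr keyae3, e1, e2, e3,
        v2 (n+1) (by omega), mul_zero, add_zero, fc_congr hB3m.coeFn_toLp, e4, fc_congr relψtu, e5]
      linear_combination ((s:ℂ)^2 - (st:ℂ)^2) * hr
  have conj3 : ⇑(K u) =ᵐ[haarT] fun x => (st:ℂ) * (ψt x * (⇑u) x) := by
    rw [eq3]
    exact hB3m.coeFn_toLp
  have part3 : ⇑(K u) =ᵐ[haarT] fun x => (st:ℂ) * ψt x * (⇑u) x := by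
    rw [show (fun x => (st:ℂ) * ψt x * (⇑u) x) = fun x => (st:ℂ) * (ψt x * (⇑u) x) from
      funext fun x => by ring]
    exact conj3
  -- PART 4
  have hIcψth : Integrable (fun x => conj (ψt x) * (⇑h) x) haarT :=
    integrable_bdd_mul (aesm_conj hψt.1)
      (hψt.2.1.mono fun x hx => by rw [RCLike.norm_conj, hx]) hih
  have hIψtψth : Integrable (fun x => ψt x * (ψt x * (⇑h) x)) haarT :=
    integrable_bdd_mul hψt.1 (hψt.2.1.mono fun x hx => hx.le) hIψth
  have hIψψtψth : Integrable (fun x => ψ x * (ψt x * (ψt x * (⇑h) x))) haarT :=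
    integrable_bdd_mul hψ.1 (hψ.2.1.mono fun x hx => hx.le) hIψtψth
  have hIzψψtψth : Integrable (fun x => fourier 1 x * (ψ x * (ψt x * (ψt x * (⇑h) x))))
      haarT :=
    integrable_bdd_mul (map_continuous (fourier 1)).aestronglyMeasurable
      (Filter.Eventually.of_forall fun x => (norm_fourier1 1 x).le) hIψψtψth
  have keyae4 : (fun x => (⇑u) x * conj ((⇑(K u)) x)) =ᵐ[haarT]
      fun x => (s:ℂ)*(st:ℂ)*((s:ℂ)^2 - (st:ℂ)^2) * (conj (ψt x) * (⇑h) x)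
        + (st:ℂ)^2*((s:ℂ)^2 - (st:ℂ)^2)
            * conj (fourier 1 x * (ψ x * (ψt x * (ψt x * (⇑h) x)))) := by
    filter_upwards [hae, hu, hh, conj3] with x hx hux hhx hKux
    obtain ⟨hb, hc⟩ := hx
    rw [hKux, hux, hhx]
    exact alg4 hst hss (norm_fourier1 1 x) hb hc
  have rel2 : ∀ m : ℤ, 1 ≤ m →
      (s:ℂ) * fourierCoeff (fun x => conj (ψt x) * (⇑h) x) m
        = (st:ℂ) * fourierCoeff (fun x => ψ x * (⇑h) x) (m - 1) := by
    intro m hm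
    have hae6 : (fun x => (s:ℂ) * (conj (ψt x) * (⇑h) x)) =ᵐ[haarT]
        fun x => conj (ψt x) + (st:ℂ) * (fourier 1 x * (ψ x * (⇑h) x)) := by
      filter_upwards [hae, hh] with x hx hhx
      obtain ⟨hb, hc⟩ := hx
      rw [hhx]
      exact alg6 hst hss (norm_fourier1 1 x) hb hc
    have e0 : (s:ℂ) * fourierCoeff (fun x => conj (ψt x) * (⇑h) x) m
        = fourierCoeff (fun x => (s:ℂ) * (conj (ψt x) * (⇑h) x)) m :=
      (fc_const_mul _ _ m).symm
    have hIzψh : Integrable (fun x => fourier 1 x * (ψ x * (⇑h) x)) haarT :=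
      integrable_bdd_mul (map_continuous (fourier 1)).aestronglyMeasurable
        (Filter.Eventually.of_forall fun x => (norm_fourier1 1 x).le) hIψh
    have e1 : fourierCoeff (fun x =>
        conj (ψt x) + (st:ℂ) * (fourier 1 x * (ψ x * (⇑h) x))) m
        = fourierCoeff (fun x => conj (ψt x)) m
          + fourierCoeff (fun x => (st:ℂ) * (fourier 1 x * (ψ x * (⇑h) x))) m :=
      fc_add (integrable_conj (integrable_of_bdd hψt.1 1
        (hψt.2.1.mono fun x hx => hx.le))) (hIzψh.const_mul _) m
    have e2 : fourierCoeff (fun x => conj (ψt x)) m = conj (fourierCoeff ψt (-m)) :=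
      fc_conj' _ m
    have e3 : fourierCoeff (fun x => (st:ℂ) * (fourier 1 x * (ψ x * (⇑h) x))) m
        = (st:ℂ) * fourierCoeff (fun x => fourier 1 x * (ψ x * (⇑h) x)) m :=
      fc_const_mul _ _ m
    have e4 : fourierCoeff (fun x => fourier 1 x * (ψ x * (⇑h) x)) m
        = fourierCoeff (fun x => ψ x * (⇑h) x) (m - 1) := fc_shiftk 1 _ m
    rw [e0, fc_congr hae6, e1, e2, hψt.2.2 (-m) (by omega), map_zero, zero_add, e3, e4]
  have eq4 : K (K u) = ((st:ℂ)^2) • u := by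
    apply HL2_ext
    intro n
    rcases lt_or_ge n 0 with hn | hn
    · rw [(hK (K u)).1 n hn, fcL_smul, hH.2.1 n hn, mul_zero]
    · have e1 : fourierCoeff (fun x =>
          (s:ℂ)*(st:ℂ)*((s:ℂ)^2 - (st:ℂ)^2) * (conj (ψt x) * (⇑h) x)
          + (st:ℂ)^2*((s:ℂ)^2 - (st:ℂ)^2)
              * conj (fourier 1 x * (ψ x * (ψt x * (ψt x * (⇑h) x))))) (n+1)
          = fourierCoeff (fun x =>
              (s:ℂ)*(st:ℂ)*((s:ℂ)^2 - (st:ℂ)^2) * (conj (ψt x) * (⇑h) x)) (n+1)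
            + fourierCoeff (fun x => (st:ℂ)^2*((s:ℂ)^2 - (st:ℂ)^2)
                * conj (fourier 1 x * (ψ x * (ψt x * (ψt x * (⇑h) x))))) (n+1) :=
        fc_add (hIcψth.const_mul _) ((integrable_conj hIzψψtψth).const_mul _) (n+1)
      have e2 : fourierCoeff (fun x =>
          (s:ℂ)*(st:ℂ)*((s:ℂ)^2 - (st:ℂ)^2) * (conj (ψt x) * (⇑h) x)) (n+1)
          = (s:ℂ)*(st:ℂ)*((s:ℂ)^2 - (st:ℂ)^2)
            * fourierCoeff (fun x => conj (ψt x) * (⇑h) x) (n+1) := fc_const_mul _ _ _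
      have e3 : fourierCoeff (fun x => (st:ℂ)^2*((s:ℂ)^2 - (st:ℂ)^2)
          * conj (fourier 1 x * (ψ x * (ψt x * (ψt x * (⇑h) x))))) (n+1)
          = (st:ℂ)^2*((s:ℂ)^2 - (st:ℂ)^2) * fourierCoeff
              (fun x => conj (fourier 1 x * (ψ x * (ψt x * (ψt x * (⇑h) x))))) (n+1) :=
        fc_const_mul _ _ _
      have e5 : fourierCoeff (fun x => ((s:ℂ)^2 - (st:ℂ)^2) * (ψ x * (⇑h) x)) n
          = ((s:ℂ)^2 - (st:ℂ)^2) * fourierCoeff (fun x => ψ x * (⇑h) x) n :=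
        fc_const_mul _ _ n
      have hr := rel2 (n+1) (by omega)
      rw [show (n + 1 - 1 : ℤ) = n by ring] at hr
      rw [(hK (K u)).2 n hn, coeffH (K u) (n+1) (by omega), fc_congr keyae4, e1, e2, e3,
        v3 (n+1) (by omega), mul_zero, add_zero, fcL_smul, fc_congr relu, e5]
      linear_combination (st:ℂ)*((s:ℂ)^2 - (st:ℂ)^2) * hr
  exact ⟨part1, eq2, part3, eq4⟩

end
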